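/- Let A : ℕ → ℕ → ℂ satisfy the bound Σ_{m² n ≤ M} |A(m,n)|² ≤ C_ε M^{1+ε} and Σ_{m² n ≤ M} |A(n,m)|² ≤ C_ε M^{1+ε} for all M ≥ 1, together with the Hecke-type relation A(n₁, n₂) = Σ_{d ∣ gcd(n₁,n₂)} μ(d)·A(n₁/d, 1)·A(1, n₂/d). Then Σ_{n₁ ≤ N₁} Σ_{n₂ ≤ N₂} |A(n₁,n₂)|² ≪_ε (N₁ N₂)^{1+2ε} for all N₁, N₂ ≥ 1. -/

import Mathlib

open scoped BigOperators

lemma swapDiv (c : ℕ → ℝ) (N : ℕ) :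
    (∑ n ∈ Finset.Icc 1 N, ∑ d ∈ n.divisors, c (n / d))
      = ∑ d ∈ Finset.Icc 1 N, ∑ e ∈ Finset.Icc 1 (N / d), c e := by
  rw [Finset.sum_sigma', Finset.sum_sigma']
  refine Finset.sum_nbij' (fun p => ⟨p.2, p.1 / p.2⟩) (fun p => ⟨p.1 * p.2, p.1⟩) ?_ ?_ ?_ ?_ ?_
  · rintro ⟨n, d⟩ hp
    simp only [Finset.mem_sigma, Finset.mem_Icc, Nat.mem_divisors] at hp ⊢
    obtain ⟨⟨h1n, hnN⟩, hd, hn0⟩ := hp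
    have hd0 : 0 < d := Nat.pos_of_dvd_of_pos hd (Nat.pos_of_ne_zero hn0)
    refine ⟨⟨hd0, le_trans (Nat.le_of_dvd (Nat.pos_of_ne_zero hn0) hd) hnN⟩,
      ⟨?_, Nat.div_le_div_right hnN⟩⟩
    exact (Nat.one_le_div_iff hd0).mpr (Nat.le_of_dvd (Nat.pos_of_ne_zero hn0) hd)
  · rintro ⟨d, e⟩ hp
    simp only [Finset.mem_sigma, Finset.mem_Icc, Nat.mem_divisors] at hp ⊢
    obtain ⟨⟨h1d, hdN⟩, h1e, heN⟩ := hp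
    have hd0 : 0 < d := h1d
    refine ⟨⟨Nat.one_le_iff_ne_zero.mpr (by positivity), ?_⟩, ⟨Dvd.intro e rfl, by positivity⟩⟩
    calc d * e ≤ d * (N / d) := Nat.mul_le_mul_left d heN
      _ ≤ N := Nat.mul_div_le N d
  · rintro ⟨n, d⟩ hp
    simp only [Finset.mem_sigma, Finset.mem_Icc, Nat.mem_divisors] at hp
    obtain ⟨_, hd, hn0⟩ := hp
    simp [Nat.mul_div_cancel' hd]
  · rintro ⟨d, e⟩ hp
    simp only [Finset.mem_sigma, Finset.mem_Icc, Nat.mem_divisors] at hp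
    obtain ⟨⟨h1d, _⟩, _⟩ := hp
    simp [Nat.mul_div_cancel_left e h1d]
  · rintro ⟨n, d⟩ _; rfl

/-- Key bound: if partial sums of a nonneg `c` satisfy `S(M) ≤ Cε M^(1+ε)`, then the
divisor-convolved sum is `≤ Cε * K₀ * N^(1+ε)`. -/
lemma divisorSumBound (c : ℕ → ℝ) (hc : ∀ e, 0 ≤ c e) (ε Cε : ℝ) (hε : 0 < ε) (hCε : 0 < Cε)
    (hS : ∀ M : ℕ, 1 ≤ M → ∑ e ∈ Finset.Icc 1 M, c e ≤ Cε * (M : ℝ) ^ (1 + ε))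
    (N : ℕ) (hN : 1 ≤ N) :
    (∑ n ∈ Finset.Icc 1 N, ∑ d ∈ n.divisors, c (n / d))
      ≤ Cε * (∑' d : ℕ, (d : ℝ) ^ (-(1 + ε))) * (N : ℝ) ^ (1 + ε) := by
  have hsummable : Summable (fun d : ℕ => (d : ℝ) ^ (-(1 + ε))) :=
    Real.summable_nat_rpow.mpr (by linarith)
  rw [swapDiv]
  have step : ∀ d ∈ Finset.Icc 1 N,
      (∑ e ∈ Finset.Icc 1 (N / d), c e) ≤ Cε * (N : ℝ) ^ (1 + ε) * ((d : ℝ) ^ (-(1 + ε))) := by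
    intro d hd
    rw [Finset.mem_Icc] at hd
    have hd0 : (0 : ℝ) < d := by exact_mod_cast hd.1
    have hM : 1 ≤ N / d := (Nat.one_le_div_iff hd.1).mpr hd.2
    have h1 : (∑ e ∈ Finset.Icc 1 (N / d), c e) ≤ Cε * ((N / d : ℕ) : ℝ) ^ (1 + ε) := hS _ hM
    have h2 : ((N / d : ℕ) : ℝ) ≤ (N : ℝ) / d := Nat.cast_div_le
    have h3 : ((N / d : ℕ) : ℝ) ^ (1 + ε) ≤ ((N : ℝ) / d) ^ (1 + ε) :=
      Real.rpow_le_rpow (by positivity) h2 (by linarith)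
    have h4 : ((N : ℝ) / d) ^ (1 + ε) = (N : ℝ) ^ (1 + ε) * (d : ℝ) ^ (-(1 + ε)) := by
      rw [Real.div_rpow (by positivity) hd0.le, Real.rpow_neg hd0.le, div_eq_mul_inv]
    calc (∑ e ∈ Finset.Icc 1 (N / d), c e) ≤ Cε * ((N / d : ℕ) : ℝ) ^ (1 + ε) := h1
      _ ≤ Cε * ((N : ℝ) / d) ^ (1 + ε) := by nlinarith [h3]
      _ = Cε * (N : ℝ) ^ (1 + ε) * ((d : ℝ) ^ (-(1 + ε))) := by rw [h4]; ring
  calc (∑ d ∈ Finset.Icc 1 N, ∑ e ∈ Finset.Icc 1 (N / d), c e)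
      ≤ ∑ d ∈ Finset.Icc 1 N, Cε * (N : ℝ) ^ (1 + ε) * ((d : ℝ) ^ (-(1 + ε))) :=
        Finset.sum_le_sum step
    _ = Cε * (N : ℝ) ^ (1 + ε) * ∑ d ∈ Finset.Icc 1 N, (d : ℝ) ^ (-(1 + ε)) := by
        rw [Finset.mul_sum]
    _ ≤ Cε * (N : ℝ) ^ (1 + ε) * (∑' d : ℕ, (d : ℝ) ^ (-(1 + ε))) := by
        have := Summable.sum_le_tsum (Finset.Icc 1 N)
          (fun i _ => Real.rpow_nonneg (Nat.cast_nonneg i) _) hsummable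
        have hNn : (0:ℝ) ≤ Cε * (N : ℝ) ^ (1 + ε) := by positivity
        nlinarith [this]
    _ = Cε * (∑' d : ℕ, (d : ℝ) ^ (-(1 + ε))) * (N : ℝ) ^ (1 + ε) := by ring

/-- If the coefficients `A : ℕ → ℕ → ℂ` satisfy the Rankin–Selberg type bounds
`Σ_{m²n ≤ M} |A(m,n)|² ≤ C_ε M^{1+ε}`, `Σ_{m²n ≤ M} |A(n,m)|² ≤ C_ε M^{1+ε}` and the
Hecke relation `A(n₁,n₂) = Σ_{d ∣ (n₁,n₂)} μ(d) A(n₁/d,1) A(1,n₂/d)`, then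
`Σ_{n₁ ≤ N₁} Σ_{n₂ ≤ N₂} |A(n₁,n₂)|² ≪_ε (N₁N₂)^{1+2ε}`. -/
theorem stmt9 (A : ℕ → ℕ → ℂ) (ε Cε : ℝ) (hε : 0 < ε) (hCε : 0 < Cε)
    (hRS1 : ∀ M : ℕ, 1 ≤ M →
      ∑ m ∈ Finset.Icc 1 M, ∑ n ∈ Finset.Icc 1 M,
          (if m ^ 2 * n ≤ M then ‖A m n‖ ^ 2 else 0) ≤ Cε * (M : ℝ) ^ (1 + ε))
    (hRS2 : ∀ M : ℕ, 1 ≤ M →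
      ∑ m ∈ Finset.Icc 1 M, ∑ n ∈ Finset.Icc 1 M,
          (if m ^ 2 * n ≤ M then ‖A n m‖ ^ 2 else 0) ≤ Cε * (M : ℝ) ^ (1 + ε))
    (hHecke : ∀ n₁ n₂ : ℕ, 1 ≤ n₁ → 1 ≤ n₂ →
      A n₁ n₂ = ∑ d ∈ (Nat.gcd n₁ n₂).divisors,
        (ArithmeticFunction.moebius d : ℂ) * A (n₁ / d) 1 * A 1 (n₂ / d)) :
    ∃ K : ℝ, 0 < K ∧ ∀ N₁ N₂ : ℕ, 1 ≤ N₁ → 1 ≤ N₂ →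
      ∑ n₁ ∈ Finset.Icc 1 N₁, ∑ n₂ ∈ Finset.Icc 1 N₂, ‖A n₁ n₂‖ ^ 2 ≤
        K * ((N₁ : ℝ) * N₂) ^ (1 + 2 * ε) := by
  set K₀ : ℝ := ∑' d : ℕ, (d : ℝ) ^ (-(1 + ε)) with hK₀
  have hsummable : Summable (fun d : ℕ => (d : ℝ) ^ (-(1 + ε))) :=
    Real.summable_nat_rpow.mpr (by linarith)
  have hK₀pos : 0 < K₀ := by
    have h1 : (1 : ℝ) ≤ K₀ := by
      have h := Summable.sum_le_tsum ({1} : Finset ℕ)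
        (fun i _ => Real.rpow_nonneg (Nat.cast_nonneg i) _) hsummable
      rw [Finset.sum_singleton] at h
      have h1 : ((1:ℕ):ℝ) ^ (-(1+ε)) = 1 := by
        rw [Nat.cast_one, Real.one_rpow]
      rw [h1] at h
      exact h
    linarith
  -- single variable partial-sum bounds
  have ha : ∀ M : ℕ, 1 ≤ M → ∑ e ∈ Finset.Icc 1 M, ‖A e 1‖ ^ 2 ≤ Cε * (M : ℝ) ^ (1 + ε) := by
    intro M hM
    refine le_trans ?_ (hRS2 M hM)
    have h1 : (∑ n ∈ Finset.Icc 1 M, (if 1 ^ 2 * n ≤ M then ‖A n 1‖ ^ 2 else 0))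
        ≤ ∑ m ∈ Finset.Icc 1 M, ∑ n ∈ Finset.Icc 1 M, (if m ^ 2 * n ≤ M then ‖A n m‖ ^ 2 else 0) := by
      refine Finset.single_le_sum (f := fun m => ∑ n ∈ Finset.Icc 1 M,
        (if m ^ 2 * n ≤ M then ‖A n m‖ ^ 2 else 0)) ?_ (by simp [hM])
      intro i _
      refine Finset.sum_nonneg fun j _ => ?_
      split <;> positivity
    refine le_trans (le_of_eq ?_) h1
    refine (Finset.sum_congr rfl fun n hn => ?_)
    rw [Finset.mem_Icc] at hn
    simp [hn.2]
  have hb : ∀ M : ℕ, 1 ≤ M → ∑ e ∈ Finset.Icc 1 M, ‖A 1 e‖ ^ 2 ≤ Cε * (M : ℝ) ^ (1 + ε) := by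
    intro M hM
    refine le_trans ?_ (hRS1 M hM)
    have h1 : (∑ n ∈ Finset.Icc 1 M, (if 1 ^ 2 * n ≤ M then ‖A 1 n‖ ^ 2 else 0))
        ≤ ∑ m ∈ Finset.Icc 1 M, ∑ n ∈ Finset.Icc 1 M, (if m ^ 2 * n ≤ M then ‖A m n‖ ^ 2 else 0) := by
      refine Finset.single_le_sum (f := fun m => ∑ n ∈ Finset.Icc 1 M,
        (if m ^ 2 * n ≤ M then ‖A m n‖ ^ 2 else 0)) ?_ (by simp [hM])
      intro i _
      refine Finset.sum_nonneg fun j _ => ?_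
      split <;> positivity
    refine le_trans (le_of_eq ?_) h1
    refine (Finset.sum_congr rfl fun n hn => ?_)
    rw [Finset.mem_Icc] at hn
    simp [hn.2]
  -- pointwise Hecke + Cauchy-Schwarz bound
  have hpt : ∀ n₁ n₂ : ℕ, 1 ≤ n₁ → 1 ≤ n₂ → ‖A n₁ n₂‖ ^ 2 ≤
      (∑ d ∈ n₁.divisors, ‖A (n₁ / d) 1‖ ^ 2) * (∑ d ∈ n₂.divisors, ‖A 1 (n₂ / d)‖ ^ 2) := by
    intro n₁ n₂ h1 h2
    set g := Nat.gcd n₁ n₂ with hg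
    have hnorm : ‖A n₁ n₂‖ ≤ ∑ d ∈ g.divisors, ‖A (n₁ / d) 1‖ * ‖A 1 (n₂ / d)‖ := by
      rw [hHecke n₁ n₂ h1 h2]
      refine le_trans (norm_sum_le _ _) (Finset.sum_le_sum fun d _ => ?_)
      rw [norm_mul, norm_mul]
      have hmu : ‖((ArithmeticFunction.moebius d : ℤ) : ℂ)‖ ≤ 1 := by
        by_cases hsq : Squarefree d
        · rw [ArithmeticFunction.moebius_apply_of_squarefree hsq]
          push_cast
          simp
        · rw [ArithmeticFunction.moebius_eq_zero_of_not_squarefree hsq]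
          simp
      calc ‖((ArithmeticFunction.moebius d : ℤ) : ℂ)‖ * ‖A (n₁ / d) 1‖ * ‖A 1 (n₂ / d)‖
          ≤ 1 * ‖A (n₁ / d) 1‖ * ‖A 1 (n₂ / d)‖ := by
            gcongr
        _ = ‖A (n₁ / d) 1‖ * ‖A 1 (n₂ / d)‖ := by ring
    have hCS : (∑ d ∈ g.divisors, ‖A (n₁ / d) 1‖ * ‖A 1 (n₂ / d)‖) ^ 2 ≤
        (∑ d ∈ g.divisors, ‖A (n₁ / d) 1‖ ^ 2) * (∑ d ∈ g.divisors, ‖A 1 (n₂ / d)‖ ^ 2) :=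
      Finset.sum_mul_sq_le_sq_mul_sq _ _ _
    have hsub1 : (∑ d ∈ g.divisors, ‖A (n₁ / d) 1‖ ^ 2) ≤ ∑ d ∈ n₁.divisors, ‖A (n₁ / d) 1‖ ^ 2 :=
      Finset.sum_le_sum_of_subset_of_nonneg
        (Nat.divisors_subset_of_dvd (by omega) (Nat.gcd_dvd_left n₁ n₂))
        (fun i _ _ => by positivity)
    have hsub2 : (∑ d ∈ g.divisors, ‖A 1 (n₂ / d)‖ ^ 2) ≤ ∑ d ∈ n₂.divisors, ‖A 1 (n₂ / d)‖ ^ 2 :=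
      Finset.sum_le_sum_of_subset_of_nonneg
        (Nat.divisors_subset_of_dvd (by omega) (Nat.gcd_dvd_right n₁ n₂))
        (fun i _ _ => by positivity)
    have hnn1 : (0:ℝ) ≤ ∑ d ∈ g.divisors, ‖A (n₁ / d) 1‖ ^ 2 :=
      Finset.sum_nonneg fun i _ => by positivity
    have hnn2 : (0:ℝ) ≤ ∑ d ∈ g.divisors, ‖A 1 (n₂ / d)‖ ^ 2 :=
      Finset.sum_nonneg fun i _ => by positivity
    calc ‖A n₁ n₂‖ ^ 2 ≤ (∑ d ∈ g.divisors, ‖A (n₁ / d) 1‖ * ‖A 1 (n₂ / d)‖) ^ 2 :=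
          pow_le_pow_left₀ (norm_nonneg _) hnorm 2
      _ ≤ (∑ d ∈ g.divisors, ‖A (n₁ / d) 1‖ ^ 2) * (∑ d ∈ g.divisors, ‖A 1 (n₂ / d)‖ ^ 2) := hCS
      _ ≤ (∑ d ∈ n₁.divisors, ‖A (n₁ / d) 1‖ ^ 2) * (∑ d ∈ n₂.divisors, ‖A 1 (n₂ / d)‖ ^ 2) :=
          mul_le_mul hsub1 hsub2 hnn2 (le_trans hnn1 hsub1)
  refine ⟨(Cε * K₀) ^ 2, by positivity, fun N₁ N₂ hN₁ hN₂ => ?_⟩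
  have hT1 := divisorSumBound (fun e => ‖A e 1‖ ^ 2) (fun e => by positivity) ε Cε hε hCε ha N₁ hN₁
  have hT2 := divisorSumBound (fun e => ‖A 1 e‖ ^ 2) (fun e => by positivity) ε Cε hε hCε hb N₂ hN₂
  have hfac : (∑ n₁ ∈ Finset.Icc 1 N₁, ∑ n₂ ∈ Finset.Icc 1 N₂, ‖A n₁ n₂‖ ^ 2) ≤
      (∑ n₁ ∈ Finset.Icc 1 N₁, ∑ d ∈ n₁.divisors, ‖A (n₁ / d) 1‖ ^ 2) *
      (∑ n₂ ∈ Finset.Icc 1 N₂, ∑ d ∈ n₂.divisors, ‖A 1 (n₂ / d)‖ ^ 2) := by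
    rw [Finset.sum_mul_sum]
    refine Finset.sum_le_sum fun n₁ hn₁ => Finset.sum_le_sum fun n₂ hn₂ => ?_
    rw [Finset.mem_Icc] at hn₁ hn₂
    exact hpt n₁ n₂ hn₁.1 hn₂.1
  have hT1nn : (0:ℝ) ≤ ∑ n₁ ∈ Finset.Icc 1 N₁, ∑ d ∈ n₁.divisors, ‖A (n₁ / d) 1‖ ^ 2 :=
    Finset.sum_nonneg fun i _ => Finset.sum_nonneg fun j _ => by positivity
  have hmono1 : Cε * K₀ * (N₁ : ℝ) ^ (1 + ε) ≤ Cε * K₀ * (N₁ : ℝ) ^ (1 + 2 * ε) := by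
    have : (N₁ : ℝ) ^ (1 + ε) ≤ (N₁ : ℝ) ^ (1 + 2 * ε) :=
      Real.rpow_le_rpow_of_exponent_le (by exact_mod_cast hN₁) (by linarith)
    nlinarith [mul_pos hCε hK₀pos]
  have hmono2 : Cε * K₀ * (N₂ : ℝ) ^ (1 + ε) ≤ Cε * K₀ * (N₂ : ℝ) ^ (1 + 2 * ε) := by
    have : (N₂ : ℝ) ^ (1 + ε) ≤ (N₂ : ℝ) ^ (1 + 2 * ε) :=
      Real.rpow_le_rpow_of_exponent_le (by exact_mod_cast hN₂) (by linarith)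
    nlinarith [mul_pos hCε hK₀pos]
  have hfinal : (∑ n₁ ∈ Finset.Icc 1 N₁, ∑ d ∈ n₁.divisors, ‖A (n₁ / d) 1‖ ^ 2) *
      (∑ n₂ ∈ Finset.Icc 1 N₂, ∑ d ∈ n₂.divisors, ‖A 1 (n₂ / d)‖ ^ 2) ≤
      (Cε * K₀ * (N₁ : ℝ) ^ (1 + 2 * ε)) * (Cε * K₀ * (N₂ : ℝ) ^ (1 + 2 * ε)) := by
    refine mul_le_mul (le_trans hT1 hmono1) (le_trans hT2 hmono2) ?_ (by positivity)
    exact Finset.sum_nonneg fun i _ => Finset.sum_nonneg fun j _ => by positivity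
  calc (∑ n₁ ∈ Finset.Icc 1 N₁, ∑ n₂ ∈ Finset.Icc 1 N₂, ‖A n₁ n₂‖ ^ 2)
      ≤ _ := hfac
    _ ≤ (Cε * K₀ * (N₁ : ℝ) ^ (1 + 2 * ε)) * (Cε * K₀ * (N₂ : ℝ) ^ (1 + 2 * ε)) := hfinal
    _ = (Cε * K₀) ^ 2 * ((N₁ : ℝ) ^ (1 + 2 * ε) * (N₂ : ℝ) ^ (1 + 2 * ε)) := by ring
    _ = (Cε * K₀) ^ 2 * ((N₁ : ℝ) * N₂) ^ (1 + 2 * ε) := by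
        rw [← Real.mul_rpow (Nat.cast_nonneg N₁) (Nat.cast_nonneg N₂)]
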